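/- Let G be a finite group with G/Z(G) ≅ C_p × C_p for a prime p. Then D(G) = {1, (2p−1)/p², (p²+p−1)/p³}, where D(G) is the set of all relative commutativity degrees of G. -/

import Mathlib

/-- The relative commutativity degree `d(H,G)` of a subgroup `H` of a group `G`. -/
noncomputable def relCommDeg {G : Type*} [Group G] (H : Subgroup G) : ℚ :=
  (Nat.card {p : H × G // (p.1 : G) * p.2 = p.2 * (p.1 : G)} : ℚ) /
    ((Nat.card H : ℚ) * (Nat.card G : ℚ))

/-- The set `D(G)` of all relative commutativity degrees of `G`. -/
noncomputable def commDegSet (G : Type*) [Group G] : Set ℚ :=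
  {q | ∃ H : Subgroup G, relCommDeg H = q}

lemma relCommDeg_eq {G : Type*} [Group G] [Finite G] (p : ℕ) (hp : p.Prime)
    (hQ : Nat.card (G ⧸ Subgroup.center G) = p^2) (H : Subgroup G) :
    relCommDeg H = ((p:ℚ) - 1 + (Nat.card (H.map (QuotientGroup.mk' (Subgroup.center G))) : ℚ)) /
      (p * (Nat.card (H.map (QuotientGroup.mk' (Subgroup.center G))) : ℚ)) := by
  classical
  haveI : Fintype G := Fintype.ofFinite G
  set Z := Subgroup.center G with hZdef
  set π := QuotientGroup.mk' Z with hπdef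
  -- centralizer index
  have hcent : ∀ g : G, g ∉ Z → (Subgroup.centralizer {g}).index = p := by
    intro g hg
    have hle : Z ≤ Subgroup.centralizer {g} := Subgroup.center_le_centralizer {g}
    have hZind : Z.index = p ^ 2 := by rw [Subgroup.index_eq_card, hQ]
    have hdvd : (Subgroup.centralizer {g}).index ∣ p ^ 2 := by
      rw [← hZind]; exact Subgroup.index_dvd_of_le hle
    obtain ⟨i, hi2, hieq⟩ := (Nat.dvd_prime_pow hp).mp hdvd
    interval_cases i
    · exfalso
      have h1 : Subgroup.centralizer {g} = ⊤ := Subgroup.index_eq_one.mp (by simpa using hieq)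
      have : ({g} : Set G) ⊆ Z := Subgroup.centralizer_eq_top_iff_subset.mp h1
      exact hg (this rfl)
    · simpa using hieq
    · exfalso
      have h1 : Z.relIndex (Subgroup.centralizer {g}) * (Subgroup.centralizer {g}).index = Z.index :=
        Subgroup.relIndex_mul_index hle
      rw [hieq, hZind] at h1
      have h2 : Z.relIndex (Subgroup.centralizer {g}) = 1 := by
        have hp2 : 0 < p ^ 2 := pow_pos hp.pos 2
        have h1' : Z.relIndex (Subgroup.centralizer {g}) * p ^ 2 = 1 * p ^ 2 := by
          rw [one_mul]; exact h1
        exact Nat.eq_of_mul_eq_mul_right hp2 h1'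
      have h3 : Subgroup.centralizer {g} ≤ Z := Subgroup.relIndex_eq_one.mp h2
      exact hg (h3 (Subgroup.mem_centralizer_iff.mpr (by simp)))
  -- counting
  set N := Nat.card {q : H × G // (q.1 : G) * q.2 = q.2 * (q.1 : G)} with hNdef
  have hN : N = ∑ h : H, Nat.card (Subgroup.centralizer {(h : G)}) := by
    rw [hNdef, Nat.card_eq_fintype_card,
      Fintype.card_congr (Equiv.subtypeProdEquivSigmaSubtype
        (fun (a : H) (b : G) => (a : G) * b = b * (a : G))), Fintype.card_sigma]
    congr 1
    ext h
    rw [Nat.card_eq_fintype_card]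
    apply Fintype.card_congr
    apply Equiv.subtypeEquivRight
    intro g
    simp [Subgroup.mem_centralizer_iff]
  set k := (Finset.univ.filter (fun h : H => (h : G) ∈ Z)).card with hkdef
  set m := (Finset.univ.filter (fun h : H => ¬ (h : G) ∈ Z)).card with hmdef
  have hkm : k + m = Nat.card H := by
    rw [Nat.card_eq_fintype_card, ← Finset.card_univ]
    exact Finset.card_filter_add_card_filter_not _
  have hpN : p * N = k * (p * Nat.card G) + m * Nat.card G := by
    rw [hN, Finset.mul_sum, ← Finset.sum_filter_add_sum_filter_not Finset.univ
      (fun h : H => (h : G) ∈ Z)]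
    congr 1
    · rw [Finset.sum_congr rfl (fun h hh => ?_), Finset.sum_const, smul_eq_mul]
      have hh' : (h : G) ∈ Z := (Finset.mem_filter.mp hh).2
      have : Subgroup.centralizer {(h : G)} = ⊤ :=
        Subgroup.centralizer_eq_top_iff_subset.mpr (by simpa using hh')
      rw [this, Subgroup.card_top]
    · rw [Finset.sum_congr rfl (fun h hh => ?_), Finset.sum_const, smul_eq_mul]
      have hh' : (h : G) ∉ Z := (Finset.mem_filter.mp hh).2
      have := Subgroup.card_mul_index (Subgroup.centralizer {(h : G)})
      rw [hcent _ hh'] at this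
      rw [← this]; ring
  -- |H| = n * k
  set n := Nat.card (H.map π) with hndef
  have hHnk : Nat.card H = n * k := by
    set f : H →* G ⧸ Z := π.comp H.subtype with hfdef
    have hker : f.ker = Z.subgroupOf H := by
      rw [hfdef, ← MonoidHom.comap_ker, hπdef, QuotientGroup.ker_mk']
      rfl
    have hrange : f.range = H.map π := by
      rw [hfdef, MonoidHom.range_eq_map, ← Subgroup.map_map, ← MonoidHom.range_eq_map,
        Subgroup.range_subtype]
    have h1 : Nat.card H = Nat.card (H ⧸ f.ker) * Nat.card f.ker :=
      Subgroup.card_eq_card_quotient_mul_card_subgroup f.ker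
    have h2 : Nat.card (H ⧸ f.ker) = n := by
      rw [Nat.card_congr (QuotientGroup.quotientKerEquivRange f).toEquiv, hrange]
    have h3 : Nat.card f.ker = k := by
      rw [hker, hkdef]
      rw [Nat.card_eq_fintype_card, Fintype.card_subtype]
      congr 1
      ext h
      simp [Subgroup.mem_subgroupOf]
    rw [h1, h2, h3]
  -- final algebra
  have hk0 : 0 < k := by
    rw [hkdef]
    apply Finset.card_pos.mpr
    exact ⟨1, by simp [hZdef, Subgroup.one_mem]⟩
  have hG0 : 0 < Nat.card G := Nat.card_pos
  have hn0 : 0 < n := Nat.card_pos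
  have e1 : (p : ℚ) * N = k * (p * Nat.card G) + m * Nat.card G := by exact_mod_cast hpN
  have e2 : (Nat.card H : ℚ) = k + m := by exact_mod_cast hkm.symm
  have e3 : (Nat.card H : ℚ) = n * k := by exact_mod_cast hHnk
  have em : (m : ℚ) = n * k - k := by linarith
  have hpq : (p : ℚ) ≠ 0 := Nat.cast_ne_zero.mpr hp.pos.ne'
  have hnq : (n : ℚ) ≠ 0 := Nat.cast_ne_zero.mpr hn0.ne'
  have hkq : (k : ℚ) ≠ 0 := Nat.cast_ne_zero.mpr hk0.ne'
  have hGq : (Nat.card G : ℚ) ≠ 0 := Nat.cast_ne_zero.mpr hG0.ne'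
  unfold relCommDeg
  rw [← hNdef, e3]
  have hc : (Nat.card G : ℚ) = (Fintype.card G : ℚ) := by rw [Nat.card_eq_fintype_card]
  rw [hc] at e1 hGq ⊢
  rw [div_eq_div_iff (mul_ne_zero (mul_ne_zero hnq hkq) hGq) (mul_ne_zero hpq hnq)]
  linear_combination (n : ℚ) * e1 + (n : ℚ) * (Fintype.card G : ℚ) * em

theorem commDegSet_of_central_quotient_CpCp (G : Type*) [Group G] [Finite G]
    (p : ℕ) (hp : p.Prime)
    (h : Nonempty ((G ⧸ Subgroup.center G) ≃* Multiplicative (ZMod p × ZMod p))) :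
    commDegSet G =
      {1, (2 * p - 1) / (p : ℚ) ^ 2, ((p : ℚ) ^ 2 + p - 1) / (p : ℚ) ^ 3} := by
  classical
  obtain ⟨e⟩ := h
  haveI : Fact p.Prime := ⟨hp⟩
  set Z := Subgroup.center G with hZdef
  set π := QuotientGroup.mk' Z with hπdef
  have hQ : Nat.card (G ⧸ Z) = p ^ 2 := by
    rw [Nat.card_congr (e.toEquiv.trans Multiplicative.toAdd), Nat.card_prod, Nat.card_zmod]
    ring
  have hpq : (p : ℚ) ≠ 0 := Nat.cast_ne_zero.mpr hp.pos.ne'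
  have key := relCommDeg_eq p hp hQ
  ext q
  simp only [commDegSet, Set.mem_setOf_eq, Set.mem_insert_iff, Set.mem_singleton_iff]
  constructor
  · rintro ⟨H, rfl⟩
    rw [key H]
    have hdvd : Nat.card (H.map π) ∣ p ^ 2 := by
      rw [← hQ]; exact Subgroup.card_subgroup_dvd_card _
    obtain ⟨i, hi2, hieq⟩ := (Nat.dvd_prime_pow hp).mp hdvd
    rw [hieq]
    interval_cases i
    · left; push_cast; field_simp; ring
    · right; left; push_cast; field_simp; ring
    · right; right; push_cast; field_simp; ring
  · rintro (rfl | rfl | rfl)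
    · refine ⟨⊥, ?_⟩
      rw [key ⊥, Subgroup.map_bot, Subgroup.card_bot]
      push_cast
      field_simp
      ring
    · have hnt : Nontrivial (G ⧸ Z) := by
        apply Finite.one_lt_card_iff_nontrivial.mp
        rw [hQ]
        exact Nat.one_lt_pow (by norm_num) hp.one_lt
      obtain ⟨q0, hq0⟩ := exists_ne (1 : G ⧸ Z)
      obtain ⟨g, rfl⟩ := QuotientGroup.mk'_surjective Z q0
      have h2 : ∀ x : Multiplicative (ZMod p × ZMod p), x ^ p = 1 := by
        intro x
        have h0 : p • (Multiplicative.toAdd x) = 0 := by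
          ext <;> simp [ZMod.natCast_self, nsmul_eq_mul]
        rw [← ofAdd_toAdd x, ← ofAdd_nsmul, h0, ofAdd_zero]
      have hpow : (π g) ^ p = 1 := by
        apply e.injective
        rw [map_pow, map_one]
        exact h2 _
      have hord : orderOf (π g) = p := orderOf_eq_prime hpow hq0
      refine ⟨Subgroup.zpowers g, ?_⟩
      rw [key, MonoidHom.map_zpowers, Nat.card_zpowers, hord]
      push_cast
      field_simp
      ring
    · refine ⟨⊤, ?_⟩
      have htop : (⊤ : Subgroup G).map π = ⊤ := by
        rw [← MonoidHom.range_eq_map]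
        exact MonoidHom.range_eq_top.mpr (QuotientGroup.mk'_surjective Z)
      rw [key ⊤, htop, Subgroup.card_top, hQ]
      push_cast
      field_simp
      ring
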